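/- Let B ∈ H^∞_{M_n} be a rational matrix function and Θ = θ I_n with θ a finite Blaschke product. Then the following are equivalent: (a) B(α) is invertible for each zero α of θ; (b) B and Θ are right coprime; (c) B and Θ are left coprime. -/

import Mathlib

open MeasureTheory Complex Real InnerProductSpace Submodule

set_option maxHeartbeats 1000000
set_option synthInstance.maxHeartbeats 200000

noncomputable section

namespace BlockToeplitz

instance fact2pi : Fact (0 < 2 * π) := ⟨by positivity⟩

/-- The unit circle, as the additive circle `ℝ / 2πℤ`. -/
abbrev 𝕋 : Type := AddCircle (2 * π)

/-- Normalized Haar (Lebesgue) measure on the circle. -/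
abbrev μ𝕋 : Measure 𝕋 := AddCircle.haarAddCircle

section Pointwise

variable {E F : Type*} [NormedAddCommGroup E] [NormedSpace ℂ E]
  [NormedAddCommGroup F] [NormedSpace ℂ F]

theorem memLp_pointwise {Φ : 𝕋 → (E →L[ℂ] F)} (hm : AEStronglyMeasurable Φ μ𝕋)
    {C : ℝ} (hC : ∀ x, ‖Φ x‖ ≤ C) (f : Lp E 2 μ𝕋) :
    MemLp (fun x => Φ x (f x)) 2 μ𝕋 := by
  refine MemLp.of_le_mul (c := C) (Lp.memLp f) ?_ ?_
  · exact isBoundedBilinearMap_apply.continuous.comp_aestronglyMeasurable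
      (hm.prodMk (Lp.aestronglyMeasurable f))
  · refine Filter.Eventually.of_forall fun x => ?_
    exact (ContinuousLinearMap.le_opNorm _ _).trans
      (mul_le_mul_of_nonneg_right (hC x) (norm_nonneg _))

/-- The operator on `L²` of pointwise application of a uniformly bounded family of
operators (e.g. multiplication by an `L^∞` matrix function). -/
def pointwiseCLM (Φ : 𝕋 → (E →L[ℂ] F)) (hm : AEStronglyMeasurable Φ μ𝕋)
    {C : ℝ} (hC : ∀ x, ‖Φ x‖ ≤ C) : Lp E 2 μ𝕋 →L[ℂ] Lp F 2 μ𝕋 :=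
  LinearMap.mkContinuous
    { toFun := fun f => (memLp_pointwise hm hC f).toLp _
      map_add' := fun f g => by
        rw [← MemLp.toLp_add (memLp_pointwise hm hC f) (memLp_pointwise hm hC g)]
        refine MemLp.toLp_congr _ _ ?_
        filter_upwards [Lp.coeFn_add f g] with x hx
        simp only [hx, Pi.add_apply, map_add]
      map_smul' := fun c f => by
        try dsimp only
        try simp only [RingHom.id_apply]
        rw [← MemLp.toLp_const_smul c (memLp_pointwise hm hC f)]
        refine MemLp.toLp_congr _ _ ?_
        filter_upwards [Lp.coeFn_smul c f] with x hx
        simp only [hx, Pi.smul_apply, ContinuousLinearMap.map_smul] }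
    (max C 0)
    (by
      intro f
      simp only [LinearMap.coe_mk, AddHom.coe_mk]
      rw [Lp.norm_toLp]
      have hb : eLpNorm (fun x => Φ x (f x)) 2 μ𝕋
          ≤ ENNReal.ofReal (max C 0) * eLpNorm (f : 𝕋 → E) 2 μ𝕋 := by
        refine eLpNorm_le_mul_eLpNorm_of_ae_le_mul ?_ 2
        refine Filter.Eventually.of_forall fun x => ?_
        exact (ContinuousLinearMap.le_opNorm _ _).trans
          (mul_le_mul_of_nonneg_right ((hC x).trans (le_max_left _ _)) (norm_nonneg _))
      calc (eLpNorm (fun x => Φ x (f x)) 2 μ𝕋).toReal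
          ≤ (ENNReal.ofReal (max C 0) * eLpNorm (f : 𝕋 → E) 2 μ𝕋).toReal := by
            refine ENNReal.toReal_mono ?_ hb
            exact ENNReal.mul_ne_top ENNReal.ofReal_ne_top (Lp.eLpNorm_ne_top f)
        _ = max C 0 * ‖f‖ := by
            rw [ENNReal.toReal_mul, ENNReal.toReal_ofReal (le_max_right C 0), Lp.norm_def])

@[simp] theorem pointwiseCLM_apply (Φ : 𝕋 → (E →L[ℂ] F)) (hm : AEStronglyMeasurable Φ μ𝕋)
    {C : ℝ} (hC : ∀ x, ‖Φ x‖ ≤ C) (f : Lp E 2 μ𝕋) :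
    pointwiseCLM Φ hm hC f = (memLp_pointwise hm hC f).toLp _ := rfl

end Pointwise

end BlockToeplitz

namespace BlockToeplitz
open scoped ComplexConjugate

variable {ι : Type} [Fintype ι]

/-- `ℂ^ι`. -/
abbrev V (ι : Type) [Fintype ι] : Type := EuclideanSpace ℂ ι

/-- The space `L²(𝕋, ℂ^ι)`. -/
abbrev L2 (ι : Type) [Fintype ι] : Type := Lp (V ι) 2 μ𝕋

/-- The vector-valued trigonometric monomial `z^k ⊗ e_i` as an element of `L²`. -/
def fourierV (ι : Type) [Fintype ι] [DecidableEq ι] (k : ℤ) (i : ι) : L2 ι :=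
  (ContinuousMap.toLp (E := V ι) 2 μ𝕋 ℂ)
    ⟨fun x => fourier k x • EuclideanSpace.single i 1,
      (map_continuous (fourier k)).smul continuous_const⟩

/-- The span of the analytic-negative monomials. -/
def negSpan (ι : Type) [Fintype ι] : Submodule ℂ (L2 ι) :=
  Submodule.span ℂ
    {f | ∃ k : ℤ, k < 0 ∧ ∃ i : ι, f = @fourierV ι _ (Classical.decEq ι) k i}

/-- The vector-valued Hardy space `H²(𝕋, ℂ^ι)`, i.e. the orthogonal complement in
`L²` of the span of the monomials `z^k ⊗ e_i`, `k < 0`. -/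
def hardy (ι : Type) [Fintype ι] : Submodule ℂ (L2 ι) := (negSpan ι)ᗮ

/-- The Hardy space as a Hilbert space. -/
abbrev H2 (ι : Type) [Fintype ι] : Type := ↥(hardy ι)

instance : CompleteSpace (H2 ι) := by
  unfold H2 hardy; infer_instance

instance : HasOrthogonalProjection (hardy ι) := by
  unfold hardy; infer_instance

/-- The orthogonal projection `P` of `L²` onto `H²`. -/
def hardyProj (ι : Type) [Fintype ι] : L2 ι →L[ℂ] H2 ι :=
  orthogonalProjection (hardy ι)

/-- A matrix-valued `L^∞` function on the circle (the matrices being identified with the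
operators on `ℂ^ι` that they induce): a bounded measurable family of operators. -/
structure Symbol (ι : Type) [Fintype ι] : Type where
  toFun : 𝕋 → (V ι →L[ℂ] V ι)
  meas : AEStronglyMeasurable toFun μ𝕋
  bound : ℝ
  le_bound : ∀ x, ‖toFun x‖ ≤ bound

instance : CoeFun (Symbol ι) (fun _ => 𝕋 → (V ι →L[ℂ] V ι)) := ⟨Symbol.toFun⟩

/-- The multiplication operator `f ↦ Φ f` on `L²(𝕋, ℂ^ι)`. -/
def Symbol.mulLp (Φ : Symbol ι) : L2 ι →L[ℂ] L2 ι :=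
  pointwiseCLM Φ.toFun Φ.meas Φ.le_bound

/-- Pointwise product (composition) of two matrix symbols. -/
def Symbol.mul (Φ Ψ : Symbol ι) : Symbol ι where
  toFun := fun x => (Φ x).comp (Ψ x)
  meas := isBoundedBilinearMap_comp.continuous.comp_aestronglyMeasurable
    (Φ.meas.prodMk Ψ.meas)
  bound := max Φ.bound 0 * max Ψ.bound 0
  le_bound := fun x => (ContinuousLinearMap.opNorm_comp_le _ _).trans <|
    mul_le_mul ((Φ.le_bound x).trans (le_max_left _ _))
      ((Ψ.le_bound x).trans (le_max_left _ _)) (norm_nonneg _) (le_max_right _ _)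

/-- The pointwise adjoint symbol `Φ*` (conjugate transpose). -/
def Symbol.star (Φ : Symbol ι) : Symbol ι where
  toFun := fun x => ContinuousLinearMap.adjoint (Φ x)
  meas := (ContinuousLinearMap.adjoint (𝕜 := ℂ) (E := V ι)
      (F := V ι)).continuous.comp_aestronglyMeasurable Φ.meas
  bound := Φ.bound
  le_bound := fun x =>
    le_trans
      (le_of_eq ((ContinuousLinearMap.adjoint (𝕜 := ℂ) (E := V ι) (F := V ι)).norm_map (Φ.toFun x)))
      (Φ.le_bound x)

end BlockToeplitz

namespace BlockToeplitz
open scoped ComplexConjugate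

theorem norm_fourier_apply (k : ℤ) (x : 𝕋) : ‖fourier k x‖ = 1 := by
  rw [fourier_apply]; exact Circle.norm_coe _

section CompNeg

variable {E : Type*} [NormedAddCommGroup E] [NormedSpace ℂ E]

/-- The composition operator `f(z) ↦ f(z̄)` (i.e. `x ↦ -x` on the additive circle)
on `L²`. -/
def compNeg (E : Type*) [NormedAddCommGroup E] [NormedSpace ℂ E] :
    Lp E 2 μ𝕋 →L[ℂ] Lp E 2 μ𝕋 :=
  LinearMap.mkContinuous
    { toFun := fun f =>
        Lp.compMeasurePreserving (E := E) (p := 2) Neg.neg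
          (Measure.measurePreserving_neg μ𝕋) f
      map_add' := fun f g => by
        exact map_add (Lp.compMeasurePreserving Neg.neg (Measure.measurePreserving_neg μ𝕋)) f g
      map_smul' := fun c f => by
        apply Lp.ext
        have h1 := Lp.coeFn_compMeasurePreserving (μ := μ𝕋) (c • f)
          (Measure.measurePreserving_neg μ𝕋)
        have h2 := Lp.coeFn_compMeasurePreserving (μ := μ𝕋) f
          (Measure.measurePreserving_neg μ𝕋)
        have h3 : ((c • f : Lp E 2 μ𝕋) : 𝕋 → E) ∘ Neg.neg
            =ᵐ[μ𝕋] ((c • (f : 𝕋 → E)) ∘ Neg.neg) :=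
          (Measure.measurePreserving_neg μ𝕋).quasiMeasurePreserving.ae_eq_comp
            (Lp.coeFn_smul c f)
        filter_upwards [h1, h3,
          Lp.coeFn_smul c (Lp.compMeasurePreserving (E := E) (p := 2) Neg.neg
            (Measure.measurePreserving_neg μ𝕋) f), h2]
          with x hx1 hx3 hx4 hx2
        rw [RingHom.id_apply, hx1, hx3, hx4]
        show c • (f : 𝕋 → E) (-x)
            = c • (Lp.compMeasurePreserving (E := E) (p := 2) Neg.neg
                (Measure.measurePreserving_neg μ𝕋) f : 𝕋 → E) x
        rw [hx2]
        rfl }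
    1
    (fun f => by
      simpa using (Lp.norm_compMeasurePreserving (E := E) (p := 2) f
        (Measure.measurePreserving_neg μ𝕋)).le)

/-- The unitary operator `J f (z) = z̄ f(z̄)` on `L²`. -/
def Jop (E : Type*) [NormedAddCommGroup E] [NormedSpace ℂ E] :
    Lp E 2 μ𝕋 →L[ℂ] Lp E 2 μ𝕋 :=
  (pointwiseCLM (fun x => (fourier (-1) x : ℂ) • (1 : E →L[ℂ] E))
      (((map_continuous (fourier (-1))).smul continuous_const).aestronglyMeasurable)
      (C := 1)
      (fun x => by
        show ‖(fourier (-1)) x • (1 : E →L[ℂ] E)‖ ≤ 1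
        rw [norm_smul ((fourier (-1)) x) (1 : E →L[ℂ] E), norm_fourier_apply, one_mul,
          ContinuousLinearMap.one_def]
        exact ContinuousLinearMap.norm_id_le)).comp (compNeg E)

end CompNeg

end BlockToeplitz

namespace BlockToeplitz
open scoped ComplexConjugate

variable {ι : Type} [Fintype ι]

/-- The pointwise transposed-conjugated-reflected symbol `Φ̃(z) := Φ(z̄)*`. -/
def Symbol.tilde (Φ : Symbol ι) : Symbol ι where
  toFun := fun x => ContinuousLinearMap.adjoint (Φ.toFun (-x))
  meas := (ContinuousLinearMap.adjoint (𝕜 := ℂ) (E := V ι)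
      (F := V ι)).continuous.comp_aestronglyMeasurable
    (Φ.meas.comp_quasiMeasurePreserving
      (Measure.measurePreserving_neg μ𝕋).quasiMeasurePreserving)
  bound := Φ.bound
  le_bound := fun x =>
    le_trans
      (le_of_eq
        ((ContinuousLinearMap.adjoint (𝕜 := ℂ) (E := V ι) (F := V ι)).norm_map (Φ.toFun (-x))))
      (Φ.le_bound (-x))

/-- A matrix symbol belongs to `H^∞` iff multiplication by it leaves the Hardy space
invariant. -/
def Symbol.MemHinf (Φ : Symbol ι) : Prop :=
  ∀ f : L2 ι, f ∈ hardy ι → Φ.mulLp f ∈ hardy ι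

/-- A matrix `H^∞` symbol is inner if `Θ(z)*Θ(z) = I` a.e. -/
def Symbol.IsInner (Φ : Symbol ι) : Prop :=
  Φ.MemHinf ∧ ∀ᵐ x ∂μ𝕋, (ContinuousLinearMap.adjoint (Φ.toFun x)).comp (Φ.toFun x) = 1

/-- The block Toeplitz operator `T_Φ = P (Φ ·)` on the vector Hardy space. -/
def toeplitz (Φ : Symbol ι) : H2 ι →L[ℂ] H2 ι :=
  (hardyProj ι).comp (Φ.mulLp.comp (hardy ι).subtypeL)

/-- The block Hankel operator `H_Φ = J P^⊥ (Φ ·)`, viewed as an operator from `H²` to `H²`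
(its image indeed lies in `H²`). -/
def hankel (Φ : Symbol ι) : H2 ι →L[ℂ] H2 ι :=
  (hardyProj ι).comp <|
    (Jop (V ι)).comp <|
      (ContinuousLinearMap.id ℂ (L2 ι) - (hardy ι).subtypeL.comp (hardyProj ι)).comp <|
        Φ.mulLp.comp (hardy ι).subtypeL

/-- The image `Θ · H²` of the Hardy space under multiplication by a symbol. -/
def Symbol.rangeH2 (Φ : Symbol ι) : Submodule ℂ (L2 ι) :=
  (hardy ι).map (Φ.mulLp : L2 ι →ₗ[ℂ] L2 ι)

/-- The model space `H(Θ) := H² ⊖ Θ H²`. -/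
def modelSpace (Θ : Symbol ι) : Submodule ℂ (L2 ι) :=
  hardy ι ⊓ (Θ.rangeH2)ᗮ

/-- A scalar-valued `L^∞` function on the circle. -/
structure SymbolS : Type where
  toFun : 𝕋 → ℂ
  meas : AEStronglyMeasurable toFun μ𝕋
  bound : ℝ
  le_bound : ∀ x, ‖toFun x‖ ≤ bound

instance : CoeFun SymbolS (fun _ => 𝕋 → ℂ) := ⟨SymbolS.toFun⟩

/-- Scalar symbols embed into matrix symbols as `φ I_n`. -/
def SymbolS.toMatrix (φ : SymbolS) (ι : Type) [Fintype ι] : Symbol ι where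
  toFun := fun x => φ.toFun x • (1 : V ι →L[ℂ] V ι)
  meas := φ.meas.smul aestronglyMeasurable_const
  bound := φ.bound
  le_bound := fun x => by
    have h0 : (0 : ℝ) ≤ φ.bound := le_trans (norm_nonneg _) (φ.le_bound 0)
    calc ‖φ.toFun x • (1 : V ι →L[ℂ] V ι)‖ ≤ ‖φ.toFun x‖ * ‖(1 : V ι →L[ℂ] V ι)‖ :=
          ContinuousLinearMap.opNorm_smul_le _ _
      _ ≤ φ.bound * 1 := by
          refine mul_le_mul (φ.le_bound x) ?_ (norm_nonneg _) h0
          rw [ContinuousLinearMap.one_def]; exact ContinuousLinearMap.norm_id_le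
      _ = φ.bound := mul_one _

/-- The scalar-valued `L²` space of the circle. -/
abbrev L2S : Type := Lp ℂ 2 μ𝕋

/-- The span of the negative trigonometric monomials. -/
def negSpanS : Submodule ℂ L2S :=
  Submodule.span ℂ {f | ∃ k : ℤ, k < 0 ∧ f = fourierLp 2 k}

/-- The scalar Hardy space `H²(𝕋)`. -/
def hardyS : Submodule ℂ L2S := negSpanSᗮ

/-- The scalar Hardy space as a Hilbert space. -/
abbrev H2S : Type := ↥hardyS

instance : CompleteSpace H2S := by unfold H2S hardyS; infer_instance

instance : HasOrthogonalProjection hardyS := by unfold hardyS; infer_instance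

/-- The Szegő (Riesz) projection `P : L² → H²`. -/
def hardyProjS : L2S →L[ℂ] H2S := orthogonalProjection hardyS

/-- Multiplication by a scalar `L^∞` function, as an operator on `L²(𝕋)`. -/
def SymbolS.mulLp (φ : SymbolS) : L2S →L[ℂ] L2S :=
  pointwiseCLM (fun x => φ.toFun x • (1 : ℂ →L[ℂ] ℂ))
    (φ.meas.smul aestronglyMeasurable_const)
    (C := φ.bound)
    (fun x => by
      calc ‖φ.toFun x • (1 : ℂ →L[ℂ] ℂ)‖ ≤ ‖φ.toFun x‖ * ‖(1 : ℂ →L[ℂ] ℂ)‖ :=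
            ContinuousLinearMap.opNorm_smul_le _ _
        _ = ‖φ.toFun x‖ := by rw [norm_one, mul_one]
        _ ≤ φ.bound := φ.le_bound x)

/-- The scalar Toeplitz operator `T_φ` on `H²`. -/
def toeplitzS (φ : SymbolS) : H2S →L[ℂ] H2S :=
  hardyProjS.comp (φ.mulLp.comp hardyS.subtypeL)

/-- The scalar Hankel operator `H_φ = J P^⊥ (φ ·)` on `H²`. -/
def hankelS (φ : SymbolS) : H2S →L[ℂ] H2S :=
  hardyProjS.comp <|
    (Jop ℂ).comp <|
      (ContinuousLinearMap.id ℂ L2S - hardyS.subtypeL.comp hardyProjS).comp <|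
        φ.mulLp.comp hardyS.subtypeL

/-- Pointwise product of scalar symbols. -/
def SymbolS.mul (φ ψ : SymbolS) : SymbolS where
  toFun := fun x => φ.toFun x * ψ.toFun x
  meas := φ.meas.mul ψ.meas
  bound := max φ.bound 0 * max ψ.bound 0
  le_bound := fun x => by
    rw [norm_mul]
    exact mul_le_mul ((φ.le_bound x).trans (le_max_left _ _))
      ((ψ.le_bound x).trans (le_max_left _ _)) (norm_nonneg _) (le_max_right _ _)

/-- The complex-conjugate symbol `φ̄`. -/
def SymbolS.conj (φ : SymbolS) : SymbolS where
  toFun := fun x => conj (φ.toFun x)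
  meas := Complex.continuous_conj.comp_aestronglyMeasurable φ.meas
  bound := φ.bound
  le_bound := fun x => le_trans (le_of_eq (RCLike.norm_conj _)) (φ.le_bound x)

/-- The reflected conjugate symbol `φ̃(z) := conj (φ(z̄))`. -/
def SymbolS.tilde (φ : SymbolS) : SymbolS where
  toFun := fun x => conj (φ.toFun (-x))
  meas := Complex.continuous_conj.comp_aestronglyMeasurable
    (φ.meas.comp_quasiMeasurePreserving
      (Measure.measurePreserving_neg μ𝕋).quasiMeasurePreserving)
  bound := φ.bound
  le_bound := fun x => le_trans (le_of_eq (RCLike.norm_conj _)) (φ.le_bound (-x))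

/-- A scalar symbol is in `H^∞` iff multiplication by it preserves `H²`. -/
def SymbolS.MemHinf (φ : SymbolS) : Prop :=
  ∀ f : L2S, f ∈ hardyS → φ.mulLp f ∈ hardyS

/-- A scalar inner function: an `H^∞` function which is unimodular a.e. on the circle. -/
def SymbolS.IsInner (φ : SymbolS) : Prop :=
  φ.MemHinf ∧ ∀ᵐ x ∂μ𝕋, ‖φ.toFun x‖ = 1

/-- The image `θ · H²` of the Hardy space under a scalar multiplication operator. -/
def SymbolS.rangeH2 (φ : SymbolS) : Submodule ℂ L2S :=
  hardyS.map (φ.mulLp : L2S →ₗ[ℂ] L2S)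

/-- The scalar model space `H(θ) = H² ⊖ θH²`. -/
def modelSpaceS (θ : SymbolS) : Submodule ℂ L2S :=
  hardyS ⊓ (θ.rangeH2)ᗮ

/-- The coordinate function `z` on the circle (i.e. `x ↦ e^{ix}`). -/
def circleCoord : 𝕋 → ℂ := fun x => fourier 1 x

/-- The symbol `z` of the unilateral shift. -/
def shiftSymbolS : SymbolS where
  toFun := circleCoord
  meas := (map_continuous (fourier 1)).aestronglyMeasurable
  bound := 1
  le_bound := fun x => le_of_eq (norm_fourier_apply 1 x)

/-- The symbol `z̄`. -/
def coshiftSymbolS : SymbolS where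
  toFun := fun x => fourier (-1) x
  meas := (map_continuous (fourier (-1))).aestronglyMeasurable
  bound := 1
  le_bound := fun x => le_of_eq (norm_fourier_apply (-1) x)

/-- An operator on a complex Hilbert space is hyponormal if its self-commutator
`[T*, T] = T*T - TT*` is a positive operator. -/
def Hyponormal {H : Type*} [NormedAddCommGroup H] [InnerProductSpace ℂ H] [CompleteSpace H]
    (T : H →L[ℂ] H) : Prop :=
  (ContinuousLinearMap.adjoint T ∘L T - T ∘L ContinuousLinearMap.adjoint T).IsPositive

/-- A Blaschke factor `b_a(z) = (z - a)/(1 - āz)`. -/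
def blaschke (a z : ℂ) : ℂ := (z - a) / (1 - conj a * z)

end BlockToeplitz

namespace BlockToeplitz
open scoped ComplexConjugate

namespace Disk

/-- `n × n` complex matrices. -/
abbrev Mat (n : ℕ) : Type := Matrix (Fin n) (Fin n) ℂ

/-- The open unit disk. -/
def 𝔻 : Set ℂ := Metric.ball 0 1

/-- A matrix function analytic on the open unit disk. -/
def AnalyticOnD {n : ℕ} (B : ℂ → Mat n) : Prop :=
  ∀ i j, DifferentiableOn ℂ (fun z => B z i j) 𝔻

/-- A matrix function bounded on the open unit disk (membership in `H^∞_{M_n}`). -/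
def BoundedOnD {n : ℕ} (B : ℂ → Mat n) : Prop :=
  ∃ C : ℝ, ∀ z ∈ 𝔻, ∀ i j, ‖B z i j‖ ≤ C

/-- A rational matrix function: some nonzero scalar polynomial multiple of it agrees with a
polynomial matrix on the disk. -/
def IsRationalMat {n : ℕ} (B : ℂ → Mat n) : Prop :=
  ∃ p : Polynomial ℂ, p ≠ 0 ∧ ∃ N : Matrix (Fin n) (Fin n) (Polynomial ℂ),
    ∀ z ∈ 𝔻, ∀ i j, p.eval z * B z i j = (N i j).eval z

/-- A finite Blaschke–Potapov product: a constant unitary times a finite product of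
Blaschke–Potapov factors `b_λ P + (I - P)` (`P` an orthogonal projection, `|λ| < 1`). -/
def IsBPProd {n : ℕ} (D : ℂ → Mat n) : Prop :=
  ∃ ν ∈ Matrix.unitaryGroup (Fin n) ℂ, ∃ L : List (ℂ × Mat n),
    (∀ q ∈ L, ‖q.1‖ < 1 ∧ q.2.IsHermitian ∧ q.2 * q.2 = q.2) ∧
    ∀ z : ℂ, D z = ν * (L.map (fun q => blaschke q.1 z • q.2 + (1 - q.2))).prod

/-- `D` is a left inner divisor of `B` (on the disk): `B = D A` with `A` analytic. -/
def IsLeftDivOn {n : ℕ} (D B : ℂ → Mat n) : Prop :=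
  ∃ A : ℂ → Mat n, AnalyticOnD A ∧ ∀ z ∈ 𝔻, B z = D z * A z

/-- Left coprimeness: every common (finite Blaschke–Potapov) left inner divisor of `B` and
`Θ` is a unitary constant. -/
def LeftCoprimeOn {n : ℕ} (B Θ : ℂ → Mat n) : Prop :=
  ∀ D : ℂ → Mat n, IsBPProd D → IsLeftDivOn D B → IsLeftDivOn D Θ →
    ∃ U ∈ Matrix.unitaryGroup (Fin n) ℂ, ∀ z ∈ 𝔻, D z = U

/-- The reflected conjugate-transposed matrix function `B̃(z) := B(z̄)*`. -/
def tildeM {n : ℕ} (B : ℂ → Mat n) : ℂ → Mat n := fun z => (B (conj z)).conjTranspose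

/-- Right coprimeness, defined through the reflected functions. -/
def RightCoprimeOn {n : ℕ} (B Θ : ℂ → Mat n) : Prop :=
  LeftCoprimeOn (tildeM B) (tildeM Θ)

end Disk

namespace Disk

lemma mem_D_iff {z : ℂ} : z ∈ 𝔻 ↔ ‖z‖ < 1 := by simp [𝔻]

lemma denom_ne {a z : ℂ} (ha : ‖a‖ < 1) (hz : ‖z‖ < 1) : 1 - conj a * z ≠ 0 := by
  intro h
  have h1 : ‖conj a * z‖ < 1 := by
    rw [norm_mul, RCLike.norm_conj]
    nlinarith [norm_nonneg a, norm_nonneg z]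
  have : (1 : ℂ) = conj a * z := by linear_combination h
  rw [← this] at h1; simp at h1

lemma blaschke_mul_denom {a z : ℂ} (ha : ‖a‖ < 1) (hz : ‖z‖ < 1) :
    blaschke a z * (1 - conj a * z) = z - a :=
  div_mul_cancel₀ _ (denom_ne ha hz)

lemma blaschke_eq_zero_iff {a z : ℂ} (ha : ‖a‖ < 1) (hz : ‖z‖ < 1) :
    blaschke a z = 0 ↔ z = a := by
  rw [blaschke, div_eq_zero_iff, sub_eq_zero]
  simp [denom_ne ha hz]

lemma blaschke_self (a : ℂ) : blaschke a a = 0 := by simp [blaschke]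

lemma differentiableOn_blaschke {a : ℂ} (ha : ‖a‖ < 1) :
    DifferentiableOn ℂ (blaschke a) 𝔻 := by
  apply DifferentiableOn.div
  · exact (differentiable_id.sub_const a).differentiableOn
  · exact ((differentiable_const _).sub
      ((differentiable_const _).mul differentiable_id)).differentiableOn
  · intro z hz; exact denom_ne ha (mem_D_iff.1 hz)

lemma differentiableOn_list_prod {l : List ℂ} (hl : ∀ a ∈ l, ‖a‖ < 1) :
    DifferentiableOn ℂ (fun z => (l.map (fun a => blaschke a z)).prod) 𝔻 := by
  induction l with
  | nil => simpa using differentiableOn_const _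
  | cons a t ih =>
      simp only [List.map_cons, List.prod_cons]
      exact (differentiableOn_blaschke (hl a (by simp))).mul
        (ih fun b hb => hl b (by simp [hb]))

lemma diffOn_dslope {f : ℂ → ℂ} {α : ℂ} (hα : α ∈ 𝔻) (hf : DifferentiableOn ℂ f 𝔻) :
    DifferentiableOn ℂ (dslope f α) 𝔻 := by
  intro z hz
  by_cases h : z = α
  · subst h
    have hA : AnalyticAt ℂ f z := hf.analyticAt ((Metric.isOpen_ball).mem_nhds hz)
    obtain ⟨p, hp⟩ := hA
    exact (hp.has_fpower_series_dslope_fslope.analyticAt).differentiableAt.differentiableWithinAt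
  · exact ((differentiableAt_dslope_of_ne h).2
      (hf.differentiableAt ((Metric.isOpen_ball).mem_nhds hz))).differentiableWithinAt

lemma hasDerivAt_conj_conj {f : ℂ → ℂ} {z f' : ℂ} (h : HasDerivAt f f' (conj z)) :
    HasDerivAt (fun w => conj (f (conj w))) (conj f') z := by
  rw [hasDerivAt_iff_tendsto] at h ⊢
  have hc : Filter.Tendsto (fun x : ℂ => conj x) (nhds z) (nhds (conj z)) :=
    (Complex.continuous_conj).continuousAt
  have hcomp := h.comp hc
  refine hcomp.congr fun x => ?_
  simp only [Function.comp]
  rw [show conj x - conj z = conj (x - z) by rw [map_sub]]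
  rw [RCLike.norm_conj]
  congr 1
  have he : conj (f (conj x)) - conj (f (conj z)) - (x - z) • conj f'
      = conj (f (conj x) - f (conj z) - conj (x - z) • f') := by
    simp only [smul_eq_mul, map_sub, map_mul, Complex.conj_conj]
  rw [he, RCLike.norm_conj]

lemma eq_zero_of_isUnit_mulVec {n : ℕ} {M : Mat n} (h : IsUnit M) {v : Fin n → ℂ}
    (hv : M.mulVec v = 0) : v = 0 := by
  have hdet := (Matrix.isUnit_iff_isUnit_det M).1 h
  calc v = ((M⁻¹ * M).mulVec v) := by
        rw [Matrix.nonsing_inv_mul _ hdet, Matrix.one_mulVec]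
    _ = M⁻¹.mulVec (M.mulVec v) := by rw [← Matrix.mulVec_mulVec]
    _ = 0 := by rw [hv, Matrix.mulVec_zero]

lemma det_eq_zero_of_not_isUnit {n : ℕ} {M : Mat n} (h : ¬ IsUnit M) : M.det = 0 := by
  by_contra hd
  exact h ((Matrix.isUnit_iff_isUnit_det M).2 (isUnit_iff_ne_zero.2 hd))

/-- A nonzero hermitian idempotent has a nonzero fixed vector. -/
lemma exists_fixed_vec {n : ℕ} {P : Mat n} (hP2 : P * P = P) (hP : P ≠ 0) :
    ∃ v : Fin n → ℂ, v ≠ 0 ∧ P.mulVec v = v := by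
  have : ∃ i j, P i j ≠ 0 := by
    by_contra h
    push_neg at h
    exact hP (by ext i j; simpa using h i j)
  obtain ⟨i, j, hij⟩ := this
  refine ⟨fun k => P k j, fun h => hij (congrFun h i), ?_⟩
  funext i'
  have := congrFun (congrFun hP2 i') j
  simpa [Matrix.mulVec, Matrix.mul_apply, dotProduct] using this

lemma not_isUnit_one_sub {n : ℕ} {P : Mat n} (hP2 : P * P = P) (hP : P ≠ 0) :
    ¬ IsUnit ((1 : Mat n) - P) := by
  obtain ⟨v, hv, hfix⟩ := exists_fixed_vec hP2 hP
  intro hU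
  apply hv
  apply eq_zero_of_isUnit_mulVec hU
  rw [Matrix.sub_mulVec, Matrix.one_mulVec, hfix, sub_self]

end Disk

open Disk in
theorem key (n : ℕ) (B : ℂ → Disk.Mat n) (hB : AnalyticOnD B)
    (θ : ℂ → ℂ) (c : ℂ) (hc : ‖c‖ = 1)
    (L : List ℂ) (hL : ∀ a ∈ L, ‖a‖ < 1)
    (hθ : ∀ z : ℂ, θ z = c * (L.map (fun a => blaschke a z)).prod) :
    (∀ α ∈ 𝔻, θ α = 0 → IsUnit (B α)) ↔
      LeftCoprimeOn B (fun z => θ z • (1 : Mat n)) := by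
  constructor
  · -- (a) → coprime
    intro ha D hBP hdB hdT
    obtain ⟨ν, hν, Lf, hfac, hD⟩ := hBP
    have hall : ∀ q ∈ Lf, q.2 = (0 : Mat n) := by
      intro q hq
      by_contra hP
      have hfq := hfac q hq
      have hmem : q.1 ∈ 𝔻 := mem_D_iff.2 hfq.1
      -- the factor at its own point is 1 - P, not a unit
      have hfactor : blaschke q.1 q.1 • q.2 + (1 - q.2) = (1 : Mat n) - q.2 := by
        rw [blaschke_self, zero_smul, zero_add]
      have hnotunit : ¬ IsUnit (blaschke q.1 q.1 • q.2 + ((1 : Mat n) - q.2)) := by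
        rw [hfactor]; exact not_isUnit_one_sub hfq.2.2 hP
      -- det of D at q.1 vanishes
      have hdet0 : (D q.1).det = 0 := by
        rw [hD q.1, Matrix.det_mul]
        have h1 : ((Lf.map (fun q' : ℂ × Mat n => blaschke q'.1 q.1 • q'.2 + (1 - q'.2))).prod).det
            = ((Lf.map (fun q' : ℂ × Mat n => blaschke q'.1 q.1 • q'.2 + (1 - q'.2))).map
                Matrix.det).prod := by
          rw [← Matrix.coe_detMonoidHom, map_list_prod]
        have h2 : (0 : ℂ) ∈ (Lf.map (fun q' : ℂ × Mat n => blaschke q'.1 q.1 • q'.2 + (1 - q'.2))).map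
            Matrix.det := by
          rw [List.map_map]
          refine List.mem_map.2 ⟨q, hq, ?_⟩
          exact (det_eq_zero_of_not_isUnit hnotunit)
        rw [h1, List.prod_eq_zero h2, mul_zero]
      have hDnot : ¬ IsUnit (D q.1) := by
        intro hU
        exact (isUnit_iff_ne_zero.1 ((Matrix.isUnit_iff_isUnit_det _).1 hU)) hdet0
      obtain ⟨A, hAan, hAeq⟩ := hdB
      obtain ⟨A', hA'an, hA'eq⟩ := hdT
      -- θ has a zero at q.1
      have hθ0 : θ q.1 = 0 := by
        by_contra hθn
        apply hDnot
        have hunit : IsUnit (θ q.1 • (1 : Mat n)) := by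
          rw [← Algebra.algebraMap_eq_smul_one]
          exact (isUnit_iff_ne_zero.2 hθn).map (algebraMap ℂ (Mat n))
        have hA'' : θ q.1 • (1 : Mat n) = D q.1 * A' q.1 := hA'eq q.1 hmem
        rw [hA''] at hunit
        exact (Matrix.isUnit_iff_isUnit_det _).2 (isUnit_of_mul_isUnit_left
          (by rwa [← Matrix.det_mul, ← Matrix.isUnit_iff_isUnit_det]))
      -- but then B q.1 is a unit, contradicting det B q.1 = 0
      have hBu := ha q.1 hmem hθ0
      have : (B q.1).det = 0 := by
        rw [hAeq q.1 hmem, Matrix.det_mul, hdet0, zero_mul]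
      exact (isUnit_iff_ne_zero.1 ((Matrix.isUnit_iff_isUnit_det _).1 hBu)) this
    refine ⟨ν, hν, fun z _ => ?_⟩
    rw [hD z]
    have : (Lf.map (fun q => blaschke q.1 z • q.2 + (1 - q.2))).prod = 1 := by
      refine List.prod_eq_one fun x hx => ?_
      obtain ⟨q, hq, rfl⟩ := List.mem_map.1 hx
      rw [hall q hq, smul_zero, sub_zero, zero_add]
    rw [this, mul_one]
  · -- coprime → (a)
    intro hco α hα hθα
    by_contra hBα
    have hαn : ‖α‖ < 1 := mem_D_iff.1 hα
    -- a left null vector of B α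
    obtain ⟨w, hw, hwB⟩ := Matrix.exists_vecMul_eq_zero_iff.2
      (det_eq_zero_of_not_isUnit hBα)
    -- normalization
    set s : ℂ := ∑ k, w k * conj (w k) with hs_def
    have hs_re : conj s = s := by
      simp only [hs_def, map_sum, map_mul, Complex.conj_conj]
      exact Finset.sum_congr rfl fun k _ => mul_comm _ _
    have hs0 : s ≠ 0 := by
      have : s = ((∑ k, Complex.normSq (w k) : ℝ) : ℂ) := by
        push_cast
        exact Finset.sum_congr rfl fun k _ => (Complex.mul_conj (w k))
      rw [this]
      norm_cast
      obtain ⟨k, hk⟩ := Function.ne_iff.1 hw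
      have hpos : 0 < ∑ k, Complex.normSq (w k) :=
        Finset.sum_pos' (fun k _ => Complex.normSq_nonneg _)
          ⟨k, Finset.mem_univ k, Complex.normSq_pos.2 hk⟩
      exact ne_of_gt hpos
    set u : Fin n → ℂ := fun k => conj (w k) / s with hu_def
    have hcu : ∑ k, w k * u k = 1 := by
      simp only [hu_def, mul_div_assoc']
      rw [← Finset.sum_div, ← hs_def, div_self hs0]
    set P : Mat n := Matrix.of fun i j => u i * w j with hP_def
    have hP2 : P * P = P := by
      ext i j
      simp only [hP_def, Matrix.mul_apply, Matrix.of_apply]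
      calc ∑ k, u i * w k * (u k * w j) = u i * w j * ∑ k, w k * u k := by
            rw [Finset.mul_sum]; exact Finset.sum_congr rfl fun k _ => by ring
        _ = u i * w j := by rw [hcu, mul_one]
    have hPH : P.IsHermitian := by
      ext i j
      simp only [hP_def, Matrix.conjTranspose_apply, Matrix.of_apply, hu_def,
        Complex.star_def, map_mul, map_div₀, map_inv₀, Complex.conj_conj, hs_re]
      ring
    have hPne : P ≠ 0 := by
      intro h
      have h0 : ∀ k, u k * w k = 0 := fun k => by
        have := congrFun (congrFun h k) k
        simpa [hP_def] using this
      have : (1 : ℂ) = 0 := by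
        rw [← hcu]
        exact Finset.sum_eq_zero fun k _ => by rw [mul_comm]; exact h0 k
      simp at this
    -- the candidate common divisor
    set D : ℂ → Mat n := fun z => blaschke α z • P + (1 - P) with hD_def
    have hBP : IsBPProd D := by
      refine ⟨1, one_mem _, [(α, P)], ?_, ?_⟩
      · intro q hq
        simp only [List.mem_singleton] at hq
        subst hq
        exact ⟨hαn, hPH, hP2⟩
      · intro z
        simp [hD_def]
    have hP1P : P * ((1 : Mat n) - P) = 0 := by rw [mul_sub, mul_one, hP2, sub_self]
    have h1PP : ((1 : Mat n) - P) * P = 0 := by rw [sub_mul, one_mul, hP2, sub_self]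
    have h1P1P : ((1 : Mat n) - P) * ((1 : Mat n) - P) = 1 - P := by
      rw [mul_sub, mul_one, h1PP, sub_zero]
    -- the analytic quotient for B
    set f : Fin n → ℂ → ℂ := fun j z => ∑ k, w k * B z k j with hf_def
    have hfd : ∀ j, DifferentiableOn ℂ (f j) 𝔻 := fun j => by
      apply DifferentiableOn.fun_sum
      intro k _
      exact (hB k j).const_mul (w k)
    have hf0 : ∀ j, f j α = 0 := fun j => by
      have := congrFun hwB j
      simpa [hf_def, Matrix.vecMul, dotProduct] using this
    set E : ℂ → Mat n := fun z => Matrix.of fun i j => u i * dslope (f j) α z with hE_def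
    set A : ℂ → Mat n :=
      fun z => (1 - conj α * z) • E z + ((1 : Mat n) - P) * B z with hA_def
    have hPE : ∀ z, P * E z = E z := fun z => by
      ext i j
      simp only [Matrix.mul_apply, hP_def, hE_def, Matrix.of_apply]
      calc ∑ k, u i * w k * (u k * dslope (f j) α z)
          = u i * dslope (f j) α z * ∑ k, w k * u k := by
            rw [Finset.mul_sum]; exact Finset.sum_congr rfl fun k _ => by ring
        _ = u i * dslope (f j) α z := by rw [hcu, mul_one]
    have hPB : ∀ z, P * B z = (z - α) • E z := fun z => by
      ext i j
      simp only [Matrix.mul_apply, hP_def, hE_def, Matrix.of_apply, Matrix.smul_apply,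
        smul_eq_mul]
      calc ∑ k, u i * w k * B z k j = u i * ∑ k, w k * B z k j := by
            rw [Finset.mul_sum]; exact Finset.sum_congr rfl fun k _ => by ring
        _ = u i * (f j z - f j α) := by rw [hf0 j, sub_zero, hf_def]
        _ = u i * ((z - α) • dslope (f j) α z) := by rw [sub_smul_dslope]
        _ = (z - α) * (u i * dslope (f j) α z) := by rw [smul_eq_mul]; ring
    have hAan : AnalyticOnD A := by
      intro i j
      have heq : ∀ z, A z i j = (1 - conj α * z) * (u i * dslope (f j) α z)
          + ∑ k, ((1 : Mat n) - P) i k * B z k j := fun z => by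
        simp [hA_def, hE_def, Matrix.mul_apply, Matrix.add_apply, Matrix.smul_apply,
          smul_eq_mul]
      refine DifferentiableOn.congr ?_ fun z _ => heq z
      refine DifferentiableOn.add ?_ ?_
      · exact (((differentiable_const _).sub
          ((differentiable_const _).mul differentiable_id)).differentiableOn).mul
          ((differentiableOn_const (u i)).mul (diffOn_dslope hα (hfd j)))
      · exact DifferentiableOn.fun_sum fun k _ => (hB k j).const_mul _
    have hdivB : IsLeftDivOn D B := by
      refine ⟨A, hAan, fun z hz => ?_⟩
      have hzn := mem_D_iff.1 hz
      have expand : D z * A z = (blaschke α z * (1 - conj α * z)) • E z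
          + ((1 : Mat n) - P) * B z := by
        simp only [hD_def, hA_def, add_mul, mul_add, smul_mul_assoc, mul_smul_comm,
          smul_smul, ← Matrix.mul_assoc, hP1P, h1P1P, hPE, Matrix.zero_mul, smul_zero,
          zero_mul, add_zero, zero_add]
        rw [sub_mul, Matrix.one_mul, hPE, sub_self, add_zero, smul_smul,
          mul_comm (blaschke α z)]
      rw [expand, blaschke_mul_denom hαn hzn, ← hPB z, sub_mul, one_mul]
      abel
    -- the analytic quotient for Θ
    have hcne : c ≠ 0 := by intro h; rw [h] at hc; simp at hc
    have hmemL : α ∈ L := by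
      have h0 : (L.map (fun a => blaschke a α)).prod = 0 := by
        have := hθ α
        rw [hθα] at this
        exact (mul_eq_zero.1 this.symm).resolve_left hcne
      rw [List.prod_eq_zero_iff] at h0
      obtain ⟨a, haL, ha0⟩ := List.mem_map.1 h0
      rw [(blaschke_eq_zero_iff (hL a haL) hαn).1 ha0]
      exact haL
    obtain ⟨l₁, l₂, hLsplit⟩ := List.append_of_mem hmemL
    set ψ : ℂ → ℂ := fun z => c * ((l₁ ++ l₂).map (fun a => blaschke a z)).prod with hψ_def
    have hmem' : ∀ a ∈ l₁ ++ l₂, ‖a‖ < 1 := by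
      intro a ha
      apply hL
      rw [hLsplit]
      rcases List.mem_append.1 ha with h | h
      · exact List.mem_append.2 (Or.inl h)
      · exact List.mem_append.2 (Or.inr (List.mem_cons_of_mem _ h))
    have hψθ : ∀ z, θ z = blaschke α z * ψ z := fun z => by
      rw [hθ z, hψ_def, hLsplit]
      simp only [List.map_append, List.prod_append, List.map_cons, List.prod_cons]
      ring
    have hψd : DifferentiableOn ℂ ψ 𝔻 :=
      (differentiableOn_const c).mul (differentiableOn_list_prod hmem')
    have hθd : DifferentiableOn ℂ θ 𝔻 := by
      refine DifferentiableOn.congr ?_ fun z _ => hθ z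
      exact (differentiableOn_const c).mul (differentiableOn_list_prod hL)
    set A' : ℂ → Mat n := fun z => ψ z • P + θ z • ((1 : Mat n) - P) with hA'_def
    have hdivT : IsLeftDivOn D (fun z => θ z • (1 : Mat n)) := by
      refine ⟨A', ?_, fun z hz => ?_⟩
      · intro i j
        have heq : ∀ z, A' z i j = ψ z * P i j + θ z * ((1 : Mat n) - P) i j := fun z => by
          simp [hA'_def, Matrix.add_apply, Matrix.smul_apply, smul_eq_mul]
        refine DifferentiableOn.congr ?_ fun z _ => heq z
        exact (hψd.mul_const _).add (hθd.mul_const _)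
      · have expand : D z * A' z = (blaschke α z * ψ z) • P + θ z • ((1 : Mat n) - P) := by
          simp only [hD_def, hA'_def, add_mul, mul_add, smul_mul_assoc, mul_smul_comm,
            smul_smul, hP2, hP1P, h1PP, h1P1P, smul_zero, add_zero, zero_add]
          rw [mul_comm (blaschke α z)]
        rw [expand, ← hψθ z, smul_sub]
        show θ z • (1 : Mat n) = _
        abel
    obtain ⟨U, hU, hUeq⟩ := hco D hBP hdivB hdivT
    have hDα : D α = 1 - P := by
      simp [hD_def, blaschke_self]
    have hUunit : IsUnit U := by
      have h1 := (Matrix.mem_unitaryGroup_iff).1 hU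
      have h2 := (Matrix.mem_unitaryGroup_iff').1 hU
      exact ⟨⟨U, star U, h1, h2⟩, rfl⟩
    have hfin : IsUnit ((1 : Mat n) - P) := by
      rw [← hDα, hUeq α hα]
      exact hUunit
    exact not_isUnit_one_sub hP2 hPne hfin


open Disk in
lemma conj_blaschke_conj (a z : ℂ) : conj (blaschke a (conj z)) = blaschke (conj a) z := by
  simp only [blaschke, map_div₀, map_sub, map_mul, map_one, Complex.conj_conj]

open Disk in
/-- Lemma 2.2. Let `B ∈ H^∞_{M_n}` be rational and `Θ = θ I_n` with `θ`
a finite Blaschke product. The following are equivalent: (a) `B(α)` is invertible for every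
zero `α` of `θ`; (b) `B` and `Θ` are right coprime; (c) `B` and `Θ` are left coprime. -/




theorem statement5 (n : ℕ) (B : ℂ → Disk.Mat n) (hB : AnalyticOnD B)
    (hbdd : BoundedOnD B) (hrat : IsRationalMat B) (θ : ℂ → ℂ) (c : ℂ) (hc : ‖c‖ = 1)
    (L : List ℂ) (hL : ∀ a ∈ L, ‖a‖ < 1)
    (hθ : ∀ z : ℂ, θ z = c * (L.map (fun a => blaschke a z)).prod) :
    ((∀ α ∈ 𝔻, θ α = 0 → IsUnit (B α)) ↔
        RightCoprimeOn B (fun z => θ z • (1 : Mat n))) ∧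
    ((∀ α ∈ 𝔻, θ α = 0 → IsUnit (B α)) ↔
        LeftCoprimeOn B (fun z => θ z • (1 : Mat n))) := by
  have hkey := key n B hB θ c hc L hL hθ
  refine ⟨?_, hkey⟩
  show _ ↔ LeftCoprimeOn (tildeM B) (tildeM (fun z => θ z • (1 : Mat n)))
  have htM : tildeM (fun z => θ z • (1 : Mat n))
      = fun z => (conj (θ (conj z))) • (1 : Mat n) := by
    funext z
    simp [tildeM, Matrix.conjTranspose_smul]
  rw [htM]
  have hB' : AnalyticOnD (tildeM B) := by
    intro i j
    have heq : ∀ z, tildeM B z i j = conj (B (conj z) j i) := fun z => by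
      simp [tildeM, Matrix.conjTranspose_apply]
    refine DifferentiableOn.congr ?_ fun z _ => heq z
    intro z hz
    have hz' : conj z ∈ 𝔻 := mem_D_iff.2 (by rw [RCLike.norm_conj]; exact mem_D_iff.1 hz)
    have hd : DifferentiableAt ℂ (fun w => B w j i) (conj z) :=
      (hB j i).differentiableAt ((Metric.isOpen_ball).mem_nhds hz')
    exact (hasDerivAt_conj_conj hd.hasDerivAt).differentiableAt.differentiableWithinAt
  have hL' : ∀ a ∈ L.map (starRingEnd ℂ), ‖a‖ < 1 := by
    intro a ha
    obtain ⟨b, hb, rfl⟩ := List.mem_map.1 ha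
    rw [RCLike.norm_conj]; exact hL b hb
  have hθ' : ∀ z : ℂ, conj (θ (conj z))
      = conj c * ((L.map (starRingEnd ℂ)).map (fun a => blaschke a z)).prod := by
    intro z
    rw [hθ (conj z), map_mul, map_list_prod (starRingEnd ℂ), List.map_map, List.map_map]
    refine congrArg (fun t => conj c * t)
      (congrArg List.prod (List.map_congr_left fun a _ => ?_))
    simpa using conj_blaschke_conj a z
  have hkey' := key n (tildeM B) hB' (fun z => conj (θ (conj z))) (conj c)
    (by rw [RCLike.norm_conj]; exact hc) (L.map (starRingEnd ℂ)) hL' hθ'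
  rw [← hkey']
  constructor
  · intro h α hα h0
    have hα' : conj α ∈ 𝔻 := mem_D_iff.2 (by rw [RCLike.norm_conj]; exact mem_D_iff.1 hα)
    have h0' : θ (conj α) = 0 := by
      have := congrArg conj h0
      rwa [Complex.conj_conj, map_zero] at this
    have hu := h (conj α) hα' h0'
    have : tildeM B α = Matrix.conjTranspose (B (conj α)) := rfl
    rw [this]
    exact (Matrix.isUnit_conjTranspose _).2 hu
  · intro h α hα h0
    have hα' : conj α ∈ 𝔻 := mem_D_iff.2 (by rw [RCLike.norm_conj]; exact mem_D_iff.1 hα)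
    have h0' : conj (θ (conj (conj α))) = 0 := by rw [Complex.conj_conj, h0, map_zero]
    have hu := h (conj α) hα' h0'
    have : tildeM B (conj α) = Matrix.conjTranspose (B α) := by simp [tildeM, Complex.conj_conj]
    rw [this] at hu
    exact (Matrix.isUnit_conjTranspose _).1 hu



end BlockToeplitz
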